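/- arXiv:1203.0481 — 2 statements merged into one kernel-verified Lean document; each statement's English description precedes it below -/
import Mathlib

section
/- Let A be an attractor of the IFS F with basin B(A), let x_0 ∈ B(A), let σ ∈ Σ^∞, and let θ_1 θ_2 … θ_P ∈ Σ^P be a finite word (P ≥ 1). If σ_{M+1} … σ_{M+P} = θ_1 θ_2 … θ_P for infinitely many distinct positive integers M, then f_{θ_P} ∘ … ∘ f_{θ_1}(C_∞(x_0,σ)) ∩ C_∞(x_0,σ) ≠ ∅. -/
open Metric Filter Set MeasureTheory

variable {X : Type*} [MetricSpace X] [CompleteSpace X]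
variable {Λ : Type*} [Fintype Λ] [Nonempty Λ]

/-- The Hutchinson operator of the IFS given by the maps `f a`, `a : Λ`. -/
def Hutch (f : Λ → X → X) (B : Set X) : Set X := ⋃ a : Λ, f a '' B

/-- `A` attracts, under iteration of the Hutchinson operator, every nonempty
compact subset of `U`, in the Hausdorff metric. -/
def Attracts (f : Λ → X → X) (A U : Set X) : Prop :=
  ∀ B : Set X, B.Nonempty → IsCompact B → B ⊆ U →
    Tendsto (fun k : ℕ => hausdorffDist ((Hutch f)^[k] B) A) atTop (nhds 0)

/-- `A` is an attractor of the IFS `f`: a nonempty compact set admitting an open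
neighbourhood `U ⊇ A` all of whose nonempty compact subsets are attracted to `A`. -/
def IsAttractor (f : Λ → X → X) (A : Set X) : Prop :=
  A.Nonempty ∧ IsCompact A ∧ ∃ U : Set X, IsOpen U ∧ A ⊆ U ∧ Attracts f A U

/-- The basin of the attractor `A`: the union of all open `U ⊇ A` from which `A` attracts. -/
def basin (f : Λ → X → X) (A : Set X) : Set X :=
  ⋃₀ {U : Set X | IsOpen U ∧ A ⊆ U ∧ Attracts f A U}

/-- The chaos game orbit of `x₀` driven by the sequence `σ` (0-indexed: `σ 0` acts first). -/
def orbit (f : Λ → X → X) (σ : ℕ → Λ) (x₀ : X) : ℕ → X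
  | 0 => x₀
  | k + 1 => f (σ k) (orbit f σ x₀ k)

/-- `C_K(x₀,σ)`: the closure of the tail `{x_k : k ≥ K}` of the chaos game orbit. -/
def tailSet (f : Λ → X → X) (σ : ℕ → Λ) (x₀ : X) (K : ℕ) : Set X :=
  closure {y : X | ∃ k : ℕ, K ≤ k ∧ orbit f σ x₀ k = y}

/-- `C_∞(x₀,σ) = ⋂_K C_K(x₀,σ)`. -/
def Cinf (f : Λ → X → X) (σ : ℕ → Λ) (x₀ : X) : Set X :=
  ⋂ K : ℕ, tailSet f σ x₀ K

/-- For a word `w = (σ₁, …, σ_m)`, `wordApply f w = f_{σ_m} ∘ ⋯ ∘ f_{σ_1}`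
(the letter `w 0` acts first). -/
def wordApply (f : Λ → X → X) {m : ℕ} (w : Fin m → Λ) (x : X) : X :=
  (List.ofFn w).foldl (fun y a => f a y) x

/-- A sequence of symbols is disjunctive if it contains every finite word
as a block of consecutive letters. -/
def Disjunctive {Γ : Type*} (σ : ℕ → Γ) : Prop :=
  ∀ (m : ℕ) (w : Fin m → Γ), ∃ j : ℕ, ∀ l : Fin m, σ (j + l.1) = w l

/-- `fibreComp f ρ K = f_{ρ_1} ∘ f_{ρ_2} ∘ ⋯ ∘ f_{ρ_K}` (0-indexed: `f (ρ 0) ∘ ⋯ ∘ f (ρ (K-1))`). -/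
def fibreComp (f : Λ → X → X) (ρ : ℕ → Λ) : ℕ → X → X
  | 0 => id
  | K + 1 => fibreComp f ρ K ∘ f (ρ K)

/-- The fibre `A_ρ = ⋂_{K ≥ 1} f_{ρ_1} ∘ ⋯ ∘ f_{ρ_K}(A)` of the attractor `A`. -/
def fibre (f : Λ → X → X) (A : Set X) (ρ : ℕ → Λ) : Set X :=
  ⋂ K : ℕ, fibreComp f ρ (K + 1) '' A

/-- `A` is strongly fibred: every open set meeting `A` contains a fibre. -/
def StronglyFibred (f : Λ → X → X) (A : Set X) : Prop :=
  ∀ U : Set X, IsOpen U → (U ∩ A).Nonempty → ∃ ρ : ℕ → Λ, fibre f A ρ ⊆ U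

section Aux

variable {X : Type*} [MetricSpace X] [CompleteSpace X]
variable {Λ : Type*} [Fintype Λ] [Nonempty Λ]

lemma orbit_mem_iterate (f : Λ → X → X) (σ : ℕ → Λ) (x₀ : X) :
    ∀ k : ℕ, orbit f σ x₀ k ∈ (Hutch f)^[k] {x₀} := by
  intro k
  induction k with
  | zero => simp [orbit]
  | succ k ih =>
      rw [Function.iterate_succ_apply']
      exact Set.mem_iUnion.2 ⟨σ k, Set.mem_image_of_mem _ ih⟩

lemma iterate_finite (f : Λ → X → X) (x₀ : X) :
    ∀ k : ℕ, ((Hutch f)^[k] {x₀}).Finite := by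
  intro k
  induction k with
  | zero => simp
  | succ k ih =>
      rw [Function.iterate_succ_apply']
      exact Set.finite_iUnion fun a => ih.image _

lemma continuous_wordApply (f : Λ → X → X) (hf : ∀ a : Λ, Continuous (f a))
    {m : ℕ} (w : Fin m → Λ) : Continuous (wordApply f w) := by
  unfold wordApply
  generalize (List.ofFn w) = l
  induction l with
  | nil => exact continuous_id
  | cons a l ih =>
      simp only [List.foldl_cons]
      exact ih.comp (hf a)

lemma wordApply_orbit (f : Λ → X → X) (σ : ℕ → Λ) (x₀ : X) :
    ∀ (P M : ℕ), wordApply f (fun l : Fin P => σ (M + l.1)) (orbit f σ x₀ M)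
      = orbit f σ x₀ (M + P) := by
  intro P
  induction P with
  | zero => intro M; simp [wordApply]
  | succ P ih =>
      intro M
      have h1 : wordApply f (fun l : Fin (P+1) => σ (M + l.1)) (orbit f σ x₀ M)
          = wordApply f (fun l : Fin P => σ ((M+1) + l.1)) (f (σ M) (orbit f σ x₀ M)) := by
        simp only [wordApply, List.ofFn_succ, List.foldl_cons]
        congr 1
        · congr 1
          funext l
          simp [Fin.val_succ]
          ring_nf
      rw [h1]
      have : f (σ M) (orbit f σ x₀ M) = orbit f σ x₀ (M + 1) := rfl
      rw [this, ih (M+1)]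
      congr 1
      omega

end Aux

/-- Lemma 2: if the word `θ = θ_1 … θ_P` occurs in `σ` at position
`M + 1` for infinitely many `M`, then `f_{θ_P} ∘ ⋯ ∘ f_{θ_1}(C_∞(x₀,σ)) ∩ C_∞(x₀,σ) ≠ ∅`. -/
theorem chaosGame_word_image_inter_Cinf
    (f : Λ → X → X) (hf : ∀ a : Λ, Continuous (f a))
    (A : Set X) (hA : IsAttractor f A)
    (x₀ : X) (hx₀ : x₀ ∈ basin f A) (σ : ℕ → Λ)
    (P : ℕ) (hP : 1 ≤ P) (θ : Fin P → Λ)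
    (hocc : {M : ℕ | ∀ l : Fin P, σ (M + l.1) = θ l}.Infinite) :
    (wordApply f θ '' Cinf f σ x₀ ∩ Cinf f σ x₀).Nonempty := by
  classical
  obtain ⟨hAne, hAcpt, -⟩ := hA
  obtain ⟨U, ⟨hUopen, hAU, hattr⟩, hxU⟩ := hx₀
  -- Hausdorff distance of the iterate of {x₀} to A tends to 0
  have htend : Tendsto (fun k : ℕ => hausdorffDist ((Hutch f)^[k] {x₀}) A) atTop (nhds 0) :=
    hattr {x₀} ⟨x₀, rfl⟩ isCompact_singleton (Set.singleton_subset_iff.2 hxU)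
  -- infDist of orbit points to A tends to 0
  have hmem := orbit_mem_iterate f σ x₀
  have hbound : ∀ k : ℕ, infDist (orbit f σ x₀ k) A ≤ hausdorffDist ((Hutch f)^[k] {x₀}) A := by
    intro k
    refine infDist_le_hausdorffDist_of_mem (hmem k) ?_
    exact hausdorffEdist_ne_top_of_nonempty_of_bounded ⟨_, hmem k⟩ hAne
      (iterate_finite f x₀ k).isBounded hAcpt.isBounded
  have hinf : Tendsto (fun k : ℕ => infDist (orbit f σ x₀ k) A) atTop (nhds 0) :=
    squeeze_zero (fun k => infDist_nonneg) hbound htend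
  -- choose occurrence positions M i ≥ i
  have hsel : ∀ i : ℕ, ∃ M : ℕ, (∀ l : Fin P, σ (M + l.1) = θ l) ∧ i ≤ M := by
    intro i
    obtain ⟨M, hM, hlt⟩ := hocc.exists_gt i
    exact ⟨M, hM, hlt.le⟩
  choose M hMocc hMge using hsel
  have hMtop : Tendsto M atTop atTop := tendsto_atTop_mono hMge tendsto_id
  set y : ℕ → X := fun i => orbit f σ x₀ (M i) with hy_def
  have hinfy : Tendsto (fun i => infDist (y i) A) atTop (nhds 0) := hinf.comp hMtop
  -- choose approximating points in A
  have hsel2 : ∀ i : ℕ, ∃ b ∈ A, dist (y i) b < infDist (y i) A + 1 / (i + 1) := by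
    intro i
    have hpos : (0 : ℝ) < 1 / (i + 1) := by positivity
    exact (infDist_lt_iff hAne).1 (by linarith [infDist_nonneg (x := y i) (s := A)])
  choose b hbA hbd using hsel2
  obtain ⟨a, haA, φ, hφ, hba⟩ := hAcpt.tendsto_subseq hbA
  -- y ∘ φ tends to a
  have hdist0 : Tendsto (fun j => dist (y (φ j)) (b (φ j))) atTop (nhds 0) := by
    have h1 : Tendsto (fun j => infDist (y (φ j)) A + 1 / (φ j + 1 : ℝ)) atTop (nhds 0) := by
      have h2 : Tendsto (fun j => (1 : ℝ) / (φ j + 1)) atTop (nhds 0) := by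
        apply tendsto_one_div_add_atTop_nhds_zero_nat.comp
        exact hφ.tendsto_atTop
      simpa using (hinfy.comp hφ.tendsto_atTop).add h2
    exact squeeze_zero (fun j => dist_nonneg) (fun j => (hbd (φ j)).le) h1
  have hya : Tendsto (fun j => y (φ j)) atTop (nhds a) := by
    rw [tendsto_iff_dist_tendsto_zero]
    have hba' : Tendsto (fun j => dist (b (φ j)) a) atTop (nhds 0) :=
      tendsto_iff_dist_tendsto_zero.1 hba
    refine squeeze_zero (fun j => dist_nonneg) (fun j => dist_triangle _ (b (φ j)) a) ?_
    simpa using hdist0.add hba'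
  -- a ∈ Cinf
  have haC : a ∈ Cinf f σ x₀ := by
    refine Set.mem_iInter.2 fun K => ?_
    refine mem_closure_of_tendsto hya ?_
    filter_upwards [eventually_ge_atTop K] with j hj
    exact ⟨M (φ j), le_trans hj (le_trans (hφ.le_apply) (hMge (φ j))), rfl⟩
  -- the image point
  have horb : ∀ j : ℕ, wordApply f θ (y (φ j)) = orbit f σ x₀ (M (φ j) + P) := by
    intro j
    have := wordApply_orbit f σ x₀ P (M (φ j))
    have hθ : (fun l : Fin P => σ (M (φ j) + l.1)) = θ := funext fun l => hMocc (φ j) l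
    rwa [hθ] at this
  have hza : Tendsto (fun j => orbit f σ x₀ (M (φ j) + P)) atTop (nhds (wordApply f θ a)) := by
    have h := ((continuous_wordApply f hf θ).tendsto a).comp hya
    exact h.congr fun j => horb j
  have hzC : wordApply f θ a ∈ Cinf f σ x₀ := by
    refine Set.mem_iInter.2 fun K => ?_
    refine mem_closure_of_tendsto hza ?_
    filter_upwards [eventually_ge_atTop K] with j hj
    exact ⟨M (φ j) + P,
      le_trans hj (le_trans (le_trans (hφ.le_apply) (hMge (φ j))) (Nat.le_add_right _ _)), rfl⟩
  exact ⟨wordApply f θ a, ⟨a, haC, rfl⟩, hzC⟩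
end

section
/- Let A be a strongly-fibred attractor of the IFS F with basin B(A), let x_0 ∈ B(A), and let (Z_n)_{n≥1} be a disjunctive stochastic process with values in Σ. Then with probability 1 the random chaos game orbit x_k = f_{Z_k}(x_{k-1}) satisfies: the tails {x_n : n ≥ p} converge to A in the Hausdorff metric as p → ∞, and A = ⋂_{p≥1} closure({x_n : n ≥ p}). -/
open Metric Filter Set MeasureTheory

variable {X : Type*} [MetricSpace X] [CompleteSpace X]
variable {Λ : Type*} [Fintype Λ] [Nonempty Λ]

set_option linter.unusedSectionVars false

lemma hutch_iter_nonempty (f : Λ → X → X) {B : Set X} (hB : B.Nonempty) (k : ℕ) :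
    ((Hutch f)^[k] B).Nonempty := by
  induction k with
  | zero => exact hB
  | succ k ih =>
    rw [Function.iterate_succ_apply']
    obtain ⟨x, hx⟩ := ih
    obtain ⟨a⟩ := ‹Nonempty Λ›
    exact ⟨f a x, mem_iUnion.2 ⟨a, ⟨x, hx, rfl⟩⟩⟩

lemma hutch_iter_compact (f : Λ → X → X) (hf : ∀ a, Continuous (f a)) {B : Set X}
    (hB : IsCompact B) (k : ℕ) : IsCompact ((Hutch f)^[k] B) := by
  induction k with
  | zero => exact hB
  | succ k ih =>
    rw [Function.iterate_succ_apply']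
    exact isCompact_iUnion fun a => ih.image (hf a)

lemma orbit_mem_iter (f : Λ → X → X) (σ : ℕ → Λ) (x₀ : X) (k : ℕ) :
    orbit f σ x₀ k ∈ (Hutch f)^[k] {x₀} := by
  induction k with
  | zero => exact rfl
  | succ k ih =>
    rw [Function.iterate_succ_apply']
    exact mem_iUnion.2 ⟨σ k, ⟨_, ih, rfl⟩⟩

lemma fibreComp_continuous (f : Λ → X → X) (hf : ∀ a, Continuous (f a)) (ρ : ℕ → Λ) (K : ℕ) :
    Continuous (fibreComp f ρ K) := by
  induction K with
  | zero => exact continuous_id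
  | succ K ih => exact ih.comp (hf _)

lemma orbit_block (f : Λ → X → X) (σ ρ : ℕ → Λ) (x₀ : X) :
    ∀ (K j : ℕ), (∀ i < K, σ (j + i) = ρ (K - 1 - i)) →
      orbit f σ x₀ (j + K) = fibreComp f ρ K (orbit f σ x₀ j) := by
  intro K
  induction K with
  | zero => intro j _; rfl
  | succ K ih =>
    intro j h
    have h1 : orbit f σ x₀ (j + (K + 1)) = orbit f σ x₀ ((j + 1) + K) := by ring_nf
    rw [h1, ih (j + 1) (fun i hi => by
      have := h (i + 1) (by omega)
      rw [show j + 1 + i = j + (i + 1) by ring, this]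
      congr 1; omega)]
    show fibreComp f ρ K (f (σ j) (orbit f σ x₀ j)) = fibreComp f ρ K (f (ρ K) (orbit f σ x₀ j))
    have := h 0 (by omega)
    simp at this
    rw [this]


lemma disjunctive_infinitely {Γ : Type*} {σ : ℕ → Γ} (hσ : Disjunctive σ)
    (m : ℕ) (w : ℕ → Γ) (P : ℕ) : ∃ j, P ≤ j ∧ ∀ i < m, σ (j + i) = w i := by
  rcases Nat.eq_zero_or_pos m with hm | hm
  · exact ⟨P, le_refl _, fun i hi => by omega⟩
  · set c := P / m + 1 with hc
    have hcm1 : P < c * m := by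
      have h2 : P % m < m := Nat.mod_lt _ hm
      have h3 := Nat.div_add_mod P m
      have h4 : m * (P / m) = P / m * m := Nat.mul_comm _ _
      have : c * m = P / m * m + m := by ring
      omega
    have hcm2 : c * m ≤ P + m := by
      have := Nat.div_mul_le_self P m
      calc c * m = P / m * m + m := by ring
        _ ≤ P + m := by omega
    obtain ⟨j, hj⟩ := hσ (P + 2 * m) (fun l => w (l.1 % m))
    refine ⟨j + c * m, by omega, fun i hi => ?_⟩
    have hlt : c * m + i < P + 2 * m := by omega
    have := hj ⟨c * m + i, hlt⟩
    simp only at this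
    rw [show j + c * m + i = j + (c * m + i) by ring, this,
      show c * m + i = i + c * m by ring, Nat.add_mul_mod_self_right, Nat.mod_eq_of_lt hi]

theorem det_chaos (f : Λ → X → X) (hf : ∀ a, Continuous (f a))
    (A : Set X) (hA : IsAttractor f A) (hsf : StronglyFibred f A)
    (x₀ : X) (hx₀ : x₀ ∈ basin f A) (σ : ℕ → Λ) (hσ : Disjunctive σ) :
    Tendsto (fun p : ℕ => hausdorffDist (tailSet f σ x₀ p) A) atTop (nhds 0) ∧
    A = ⋂ p : ℕ, tailSet f σ x₀ p := by
  obtain ⟨hAne, hAcomp, -⟩ := hA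
  obtain ⟨U, ⟨hUopen, hAU, hattr⟩, hx₀U⟩ := hx₀
  -- the orbit approaches A
  have hconv : Tendsto (fun k => hausdorffDist ((Hutch f)^[k] {x₀}) A) atTop (nhds 0) :=
    hattr {x₀} (singleton_nonempty x₀) isCompact_singleton (singleton_subset_iff.2 hx₀U)
  have hedist : ∀ k, EMetric.hausdorffEdist ((Hutch f)^[k] {x₀}) A ≠ ⊤ := fun k =>
    hausdorffEdist_ne_top_of_nonempty_of_bounded (hutch_iter_nonempty f (singleton_nonempty x₀) k) hAne
      ((hutch_iter_compact f hf isCompact_singleton k).isBounded) hAcomp.isBounded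
  have horb : Tendsto (fun k => infDist (orbit f σ x₀ k) A) atTop (nhds 0) :=
    squeeze_zero (fun _ => infDist_nonneg) (fun k =>
      infDist_le_hausdorffDist_of_mem (orbit_mem_iter f σ x₀ k) (hedist k)) hconv
  have horb' : ∀ ε : ℝ, 0 < ε → ∃ N, ∀ k, N ≤ k → infDist (orbit f σ x₀ k) A < ε := by
    intro ε hε
    obtain ⟨N, hN⟩ := (Metric.tendsto_atTop.1 horb) ε hε
    refine ⟨N, fun k hk => ?_⟩
    have := hN k hk
    rwa [Real.dist_0_eq_abs, abs_of_nonneg infDist_nonneg] at this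
  -- orbit eventually enters any open neighbourhood of A
  have hnbhd : ∀ V : Set X, IsOpen V → A ⊆ V → ∃ N, ∀ k, N ≤ k → orbit f σ x₀ k ∈ V := by
    intro V hV hAV
    obtain ⟨δ, hδpos, hδ⟩ := hAcomp.exists_thickening_subset_open hV hAV
    obtain ⟨N, hN⟩ := horb' δ hδpos
    exact ⟨N, fun k hk => hδ ((mem_thickening_iff_infDist_lt hAne).2 (hN k hk))⟩
  -- invariance : Hutch f A ⊆ A
  have hFA : ∀ (a : Λ), ∀ x ∈ A, f a x ∈ A := by
    intro a x hx
    have hconvA : Tendsto (fun k => hausdorffDist ((Hutch f)^[k] A) A) atTop (nhds 0) :=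
      hattr A hAne hAcomp hAU
    have hne : ∀ k, ((Hutch f)^[k] A).Nonempty := hutch_iter_nonempty f hAne
    have hcp : ∀ k, IsCompact ((Hutch f)^[k] A) := hutch_iter_compact f hf hAcomp
    have hed : ∀ k, EMetric.hausdorffEdist ((Hutch f)^[k] A) A ≠ ⊤ := fun k =>
      hausdorffEdist_ne_top_of_nonempty_of_bounded (hne k) hAne ((hcp k).isBounded)
        hAcomp.isBounded
    have hchoice : ∀ k : ℕ, ∃ y ∈ (Hutch f)^[k] A,
        dist x y < hausdorffDist ((Hutch f)^[k] A) A + (1 : ℝ)/(k+1) := by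
      intro k
      apply (infDist_lt_iff (hne k)).1
      have h1 : infDist x ((Hutch f)^[k] A) ≤ hausdorffDist ((Hutch f)^[k] A) A := by
        rw [hausdorffDist_comm]
        exact infDist_le_hausdorffDist_of_mem hx (by rw [EMetric.hausdorffEdist_comm]; exact hed k)
      have h2 : (0:ℝ) < 1/(k+1) := by positivity
      linarith
    choose w hw hwd using hchoice
    have hwx : Tendsto w atTop (nhds x) := by
      rw [tendsto_iff_dist_tendsto_zero]
      have hsum : Tendsto (fun k : ℕ => hausdorffDist ((Hutch f)^[k] A) A + (1:ℝ)/(k+1))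
          atTop (nhds 0) := by
        have := hconvA.add tendsto_one_div_add_atTop_nhds_zero_nat
        simpa using this
      exact squeeze_zero (fun _ => dist_nonneg)
        (fun k => by rw [dist_comm]; exact (hwd k).le) hsum
    have h2 : Tendsto (fun k => f a (w k)) atTop (nhds (f a x)) :=
      ((hf a).tendsto x).comp hwx
    have h3 : ∀ k, infDist (f a (w k)) A ≤ hausdorffDist ((Hutch f)^[k+1] A) A := by
      intro k
      apply infDist_le_hausdorffDist_of_mem ?_ (hed (k+1))
      rw [Function.iterate_succ_apply']
      exact mem_iUnion.2 ⟨a, ⟨w k, hw k, rfl⟩⟩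
    have h4 : Tendsto (fun k => infDist (f a (w k)) A) atTop (nhds 0) :=
      squeeze_zero (fun _ => infDist_nonneg) h3
        (hconvA.comp (tendsto_add_atTop_nat 1))
    have h5 : Tendsto (fun k => infDist (f a (w k)) A) atTop (nhds (infDist (f a x) A)) :=
      ((continuous_infDist_pt A).tendsto _).comp h2
    exact (hAcomp.isClosed.mem_iff_infDist_zero hAne).2 (tendsto_nhds_unique h5 h4)
  -- A is contained in every tail set
  have hA_sub : ∀ p, A ⊆ tailSet f σ x₀ p := by
    intro p a ha
    rw [tailSet, Metric.mem_closure_iff]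
    intro ε hε
    obtain ⟨ρ, hρ⟩ := hsf (ball a ε) isOpen_ball ⟨a, mem_ball_self hε, ha⟩
    set D : ℕ → Set X := fun K => fibreComp f ρ K '' A with hD
    have hDcomp : ∀ K, IsCompact (D K) := fun K => hAcomp.image (fibreComp_continuous f hf ρ K)
    have hDstep : ∀ K, D (K+1) ⊆ D K := by
      rintro K y ⟨x, hx, rfl⟩
      exact ⟨f (ρ K) x, hFA _ _ hx, rfl⟩
    have hDanti : ∀ K L, K ≤ L → D L ⊆ D K := by
      intro K L h
      induction L with
      | zero => simpa [Nat.le_zero.1 h]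
      | succ L ih =>
        rcases Nat.lt_or_ge K (L+1) with h' | h'
        · exact (hDstep L).trans (ih (by omega))
        · have : K = L + 1 := by omega
          simp [this]
    have hint : (D 1 ∩ (ball a ε)ᶜ) ∩ ⋂ K, D (K+1) = ∅ := by
      ext y
      simp only [mem_inter_iff, mem_iInter, mem_empty_iff_false, iff_false, not_and]
      rintro ⟨-, hyc⟩ hyK
      exact hyc (hρ (mem_iInter.2 hyK))
    obtain ⟨K, hK⟩ := ((hDcomp 1).inter_right isOpen_ball.isClosed_compl).elim_directed_family_closed
      (fun K => D (K+1)) (fun K => (hDcomp (K+1)).isClosed) hint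
      (fun i j => ⟨max i j, hDanti _ _ (by omega), hDanti _ _ (by omega)⟩)
    have hDball : D (K+1) ⊆ ball a ε := by
      intro y hy
      by_contra hyn
      have : y ∈ (D 1 ∩ (ball a ε)ᶜ) ∩ D (K+1) := ⟨⟨hDanti 1 (K+1) (by omega) hy, hyn⟩, hy⟩
      rw [hK] at this
      exact this
    -- the orbit enters the ball
    have hVopen : IsOpen (fibreComp f ρ (K+1) ⁻¹' ball a ε) :=
      isOpen_ball.preimage (fibreComp_continuous f hf ρ (K+1))
    have hAV : A ⊆ fibreComp f ρ (K+1) ⁻¹' ball a ε := fun x hx =>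
      hDball ⟨x, hx, rfl⟩
    obtain ⟨N, hN⟩ := hnbhd _ hVopen hAV
    obtain ⟨j, hjP, hjblock⟩ := disjunctive_infinitely hσ (K+1)
      (fun i => ρ (K + 1 - 1 - i)) (max N p)
    have hblock : orbit f σ x₀ (j + (K+1)) = fibreComp f ρ (K+1) (orbit f σ x₀ j) :=
      orbit_block f σ ρ x₀ (K+1) j hjblock
    refine ⟨orbit f σ x₀ (j + (K+1)), ⟨j + (K+1), by omega, rfl⟩, ?_⟩
    have : orbit f σ x₀ (j + (K+1)) ∈ ball a ε := by
      rw [hblock]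
      exact hN j (le_trans (le_max_left _ _) hjP)
    rw [dist_comm]
    exact this
  -- tail sets shrink into neighbourhoods of A
  have htail : ∀ ε : ℝ, 0 < ε → ∃ N, ∀ p, N ≤ p →
      tailSet f σ x₀ p ⊆ {y : X | infDist y A ≤ ε} := by
    intro ε hε
    obtain ⟨N, hN⟩ := horb' ε hε
    refine ⟨N, fun p hp => ?_⟩
    have hclosed : IsClosed {y : X | infDist y A ≤ ε} :=
      isClosed_le (continuous_infDist_pt A) continuous_const
    rw [tailSet]
    rw [hclosed.closure_subset_iff]
    rintro - ⟨k, hk, rfl⟩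
    exact (hN k (le_trans hp hk)).le
  have hbound : ∀ ε : ℝ, 0 < ε → ∃ N, ∀ p, N ≤ p →
      hausdorffDist (tailSet f σ x₀ p) A ≤ ε := by
    intro ε hε
    obtain ⟨N, hN⟩ := htail ε hε
    refine ⟨N, fun p hp => hausdorffDist_le_of_infDist hε.le (fun y hy => hN p hp hy) ?_⟩
    intro x hx
    rw [infDist_zero_of_mem (hA_sub p hx)]
    exact hε.le
  constructor
  · rw [Metric.tendsto_atTop]
    intro ε hε
    obtain ⟨N, hN⟩ := hbound (ε/2) (by linarith)
    refine ⟨N, fun p hp => ?_⟩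
    rw [Real.dist_0_eq_abs, abs_of_nonneg hausdorffDist_nonneg]
    linarith [hN p hp]
  · apply Subset.antisymm (subset_iInter hA_sub)
    intro y hy
    have h0 : infDist y A ≤ 0 := by
      apply le_of_forall_pos_le_add
      intro ε hε
      obtain ⟨N, hN⟩ := htail ε hε
      have := hN N le_rfl (mem_iInter.1 hy N)
      simpa using this
    exact (hAcomp.isClosed.mem_iff_infDist_zero hAne).2 (le_antisymm h0 infDist_nonneg)

/-- Theorem "stochaosgame": if `A` is a strongly-fibred attractor,
`x₀` lies in its basin, and the driving stochastic process is disjunctive, then with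
probability 1 the tails of the random orbit converge to `A` in the Hausdorff metric
and `A = ⋂_p closure {x_n : n ≥ p}`. -/
theorem stochastic_chaosGame_yields_attractor
    (f : Λ → X → X) (hf : ∀ a : Λ, Continuous (f a))
    (A : Set X) (hA : IsAttractor f A) (hsf : StronglyFibred f A)
    (x₀ : X) (hx₀ : x₀ ∈ basin f A)
    {S : Type*} [MeasurableSpace S] (Pr : Measure S) [IsProbabilityMeasure Pr]
    [MeasurableSpace Λ] [MeasurableSingletonClass Λ]
    (Z : ℕ → S → Λ) (hZ : ∀ n : ℕ, Measurable (Z n))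
    (hdisj : ∀ (m : ℕ) (τ : Fin m → Λ),
      Pr {s : S | ∃ n : ℕ, ∀ l : Fin m, Z (n + l.1) s = τ l} = 1) :
    Pr {s : S |
        Tendsto (fun p : ℕ => hausdorffDist (tailSet f (fun n => Z n s) x₀ p) A)
          atTop (nhds 0) ∧
        A = ⋂ p : ℕ, tailSet f (fun n => Z n s) x₀ p} = 1 := by
  set D : Set S := {s : S | Disjunctive (fun n => Z n s)} with hDdef
  have hDT : D ⊆ {s : S |
      Tendsto (fun p : ℕ => hausdorffDist (tailSet f (fun n => Z n s) x₀ p) A)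
        atTop (nhds 0) ∧
      A = ⋂ p : ℕ, tailSet f (fun n => Z n s) x₀ p} := fun s hs =>
    det_chaos f hf A hA hsf x₀ hx₀ _ hs
  have hEmeas : ∀ (m : ℕ) (τ : Fin m → Λ),
      MeasurableSet {s : S | ∃ n : ℕ, ∀ l : Fin m, Z (n + l.1) s = τ l} := by
    intro m τ
    have : {s : S | ∃ n, ∀ l : Fin m, Z (n + l.1) s = τ l}
        = ⋃ n : ℕ, ⋂ l : Fin m, (Z (n + l.1)) ⁻¹' {τ l} := by
      ext s
      simp [Set.mem_iUnion, Set.mem_iInter, Set.mem_preimage]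
    rw [this]
    exact MeasurableSet.iUnion fun n =>
      MeasurableSet.iInter fun l => (hZ _) (measurableSet_singleton _)
  have hD : D = ⋂ q : (Σ m : ℕ, Fin m → Λ),
      {s : S | ∃ n : ℕ, ∀ l : Fin q.1, Z (n + l.1) s = q.2 l} := by
    ext s
    simp only [hDdef, mem_iInter, mem_setOf_eq, Sigma.forall]
    rfl
  have hDmeas : MeasurableSet D := by
    rw [hD]
    exact MeasurableSet.iInter fun q => hEmeas q.1 q.2
  have hPrD : Pr D = 1 := by
    rw [← prob_compl_eq_zero_iff hDmeas]
    have hcompl : Dᶜ = ⋃ q : (Σ m : ℕ, Fin m → Λ),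
        {s : S | ∃ n : ℕ, ∀ l : Fin q.1, Z (n + l.1) s = q.2 l}ᶜ := by
      rw [hD, compl_iInter]
    rw [hcompl]
    exact measure_iUnion_null fun q =>
      (prob_compl_eq_zero_iff (hEmeas q.1 q.2)).2 (hdisj q.1 q.2)
  exact le_antisymm prob_le_one (hPrD ▸ measure_mono hDT)
end
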